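/- (Theorem 2.3) Let M_q(n) be the standard quantized matrix algebra over K with n ≥ 2 and q ≠ 0, and assume the ordered monomials {z^α : α ∈ ℕ^{I(n)}} form a K-basis of M_q(n). Then there exists a total order ≺ on ℕ^{I(n)} (namely the lexicographic order) such that: (1) ≺ is a well-order; (2) for all α, β, η, γ with γ ≠ 0, β ≠ γ, and γ = LE(z^α z^β z^η), one has β ≺ γ; (3) if α ≺ β then LE(z^γ z^α z^η) ≺ LE(z^γ z^β z^η); and (4) for every pair of generators z_{st}, z_{ij} with (s,t) < (i,j) there exist λ ∈ K \ {0} and f ∈ M_q(n) such that z_{st} z_{ij} = λ z_{ij} z_{st} + f with f = 0 or LE(f) ≺ ε_{ij} + ε_{st}. That is, M_q(n) is a solvable polynomial algebra. -/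

import Mathlib

/-! Common setup: the standard quantized matrix algebra `M_q(n)` of
Faddeev–Reshetikhin–Takhtajan, defined as the quotient of the free
`K`-algebra on the `n²` generators `z_{ij}` by the two-sided ideal
generated by the relations R1–R4. -/

/-- The generator `z_{ij}` of the free algebra on `Fin n × Fin n`. -/
noncomputable def freeGen (K : Type*) [Field K] (n : ℕ) (i j : Fin n) :
    FreeAlgebra K (Fin n × Fin n) :=
  FreeAlgebra.ι K (i, j)

/-- The defining relations R1–R4 of the standard quantized matrix algebra. -/
inductive QMRel (K : Type*) [Field K] (q : K) (n : ℕ) :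
    FreeAlgebra K (Fin n × Fin n) → FreeAlgebra K (Fin n × Fin n) → Prop
  | r1 (i j k : Fin n) (h : j < k) :
      QMRel K q n (freeGen K n i j * freeGen K n i k)
        (q • (freeGen K n i k * freeGen K n i j))
  | r2 (i j k : Fin n) (h : i < k) :
      QMRel K q n (freeGen K n i j * freeGen K n k j)
        (q • (freeGen K n k j * freeGen K n i j))
  | r3 (i j s t : Fin n) (h1 : i < s) (h2 : t < j) :
      QMRel K q n (freeGen K n i j * freeGen K n s t)
        (freeGen K n s t * freeGen K n i j)
  | r4 (i j s t : Fin n) (h1 : i < s) (h2 : j < t) :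
      QMRel K q n (freeGen K n i j * freeGen K n s t)
        (freeGen K n s t * freeGen K n i j +
          (q - q⁻¹) • (freeGen K n i t * freeGen K n s j))

/-- The standard quantized matrix algebra `M_q(n)`: the quotient of the free
algebra by the two-sided ideal generated by the relations R1–R4. -/
abbrev QuantumMatrix (K : Type*) [Field K] (q : K) (n : ℕ) :=
  RingQuot (QMRel K q n)

/-- The generator `z_{ij}` of `M_q(n)`. -/
noncomputable def Zgen (K : Type*) [Field K] (q : K) (n : ℕ) (i j : Fin n) :
    QuantumMatrix K q n :=
  RingQuot.mkAlgHom K (QMRel K q n) (freeGen K n i j)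

/-- The order on the index set `I(n)`: `(k,l) < (i,j)` iff `k < i`, or
`k = i` and `l < j`. -/
def idxLt {n : ℕ} (p r : Fin n × Fin n) : Prop :=
  p.1 < r.1 ∨ (p.1 = r.1 ∧ p.2 < r.2)

/-- The ordered monomial `z^α`: the product of the `z_{ij}^{α_{ij}}` taken
in decreasing order of the indices `(i,j)`, i.e.
`z_{nn}^{α_{nn}} z_{n,n-1}^{α_{n,n-1}} ⋯ z_{n1}^{α_{n1}} ⋯ z_{11}^{α_{11}}`. -/
noncomputable def zmon (K : Type*) [Field K] (q : K) {n : ℕ}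
    (α : Fin n × Fin n → ℕ) : QuantumMatrix K q n :=
  ((List.finRange n).reverse.flatMap fun i =>
    (List.finRange n).reverse.map fun j => Zgen K q n i j ^ α (i, j)).prod

/-- The lexicographic order on exponent vectors: `α ≺ β` iff `α` is smaller
than `β` at the largest index (w.r.t. the order on `I(n)`) at which they
differ. -/
def expLt {n : ℕ} (α β : Fin n × Fin n → ℕ) : Prop :=
  ∃ p : Fin n × Fin n, α p < β p ∧ ∀ r : Fin n × Fin n, idxLt p r → α r = β r

/-- The indicator exponent vector `ε_{ij}`. -/
def eps {n : ℕ} (i j : Fin n) : Fin n × Fin n → ℕ :=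
  fun p => if p = (i, j) then 1 else 0

/-- `γ` is the leading exponent of `f` with respect to the order `lt`,
relative to the PBW basis `b` indexed by exponent vectors:
`γ` occurs with nonzero coefficient in the expansion of `f` and every other
exponent occurring in `f` is `lt`-smaller than `γ`. -/
def IsLeadExpWrt {K : Type*} [Field K] {q : K} {n : ℕ}
    (lt : (Fin n × Fin n → ℕ) → (Fin n × Fin n → ℕ) → Prop)
    (b : Module.Basis (Fin n × Fin n → ℕ) K (QuantumMatrix K q n))
    (f : QuantumMatrix K q n) (γ : Fin n × Fin n → ℕ) : Prop :=
  b.repr f γ ≠ 0 ∧ ∀ δ, b.repr f δ ≠ 0 → δ = γ ∨ lt δ γ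

/-- `γ` is the leading exponent of `f` w.r.t. the lexicographic order. -/
def IsLeadExp {K : Type*} [Field K] {q : K} {n : ℕ}
    (b : Module.Basis (Fin n × Fin n → ℕ) K (QuantumMatrix K q n))
    (f : QuantumMatrix K q n) (γ : Fin n × Fin n → ℕ) : Prop :=
  IsLeadExpWrt expLt b f γ

namespace QMX


variable {n : ℕ}

theorem idxLt_irrefl (p : Fin n × Fin n) : ¬ idxLt p p := by
  rintro (h | ⟨-, h⟩) <;> exact lt_irrefl _ h

theorem idxLt_trans {a b c : Fin n × Fin n} (h1 : idxLt a b) (h2 : idxLt b c) : idxLt a c := by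
  rcases h1 with h1 | ⟨e1, h1⟩ <;> rcases h2 with h2 | ⟨e2, h2⟩
  · exact Or.inl (h1.trans h2)
  · exact Or.inl (e2 ▸ h1)
  · exact Or.inl (e1 ▸ h2)
  · exact Or.inr ⟨e1.trans e2, h1.trans h2⟩

theorem idxLt_trichotomy (a b : Fin n × Fin n) : idxLt a b ∨ a = b ∨ idxLt b a := by
  rcases lt_trichotomy a.1 b.1 with h | h | h
  · exact Or.inl (Or.inl h)
  · rcases lt_trichotomy a.2 b.2 with h2 | h2 | h2
    · exact Or.inl (Or.inr ⟨h, h2⟩)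
    · exact Or.inr (Or.inl (Prod.ext h h2))
    · exact Or.inr (Or.inr (Or.inr ⟨h.symm, h2⟩))
  · exact Or.inr (Or.inr (Or.inl h))

theorem idxLt_asymm {a b : Fin n × Fin n} (h : idxLt a b) : ¬ idxLt b a :=
  fun h' => idxLt_irrefl a (idxLt_trans h h')

/-- swapped order, used as the `r` in `Pi.Lex`. -/
def ridx {n : ℕ} (p r : Fin n × Fin n) : Prop := idxLt r p

instance : IsTrichotomous (Fin n × Fin n) ridx :=
  Std.trichotomous_of_rel_or_eq_or_rel_swap (r := ridx) fun {a b} => by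
    rcases idxLt_trichotomy a b with h | h | h
    exacts [Or.inr (Or.inr h), Or.inr (Or.inl h), Or.inl h]

instance : IsTrans (Fin n × Fin n) ridx := ⟨fun _ _ _ h1 h2 => idxLt_trans h2 h1⟩
instance : IsIrrefl (Fin n × Fin n) ridx := ⟨fun a => idxLt_irrefl a⟩

instance : IsStrictTotalOrder (Fin n × Fin n) ridx := {}

theorem expLt_iff_pilex {α β : Fin n × Fin n → ℕ} :
    expLt α β ↔ Pi.Lex ridx (· < ·) α β := by
  constructor
  · rintro ⟨p, h1, h2⟩; exact ⟨p, fun j hj => h2 j hj, h1⟩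
  · rintro ⟨p, h2, h1⟩; exact ⟨p, h1, fun j hj => h2 j hj⟩

theorem expLt_wf : WellFounded (@expLt n) := by
  have := Pi.Lex.wellFounded (ι := Fin n × Fin n) ridx
    (s := fun _ => ((· < ·) : ℕ → ℕ → Prop)) (fun _ => Nat.lt_wfRel.wf)
  exact Subrelation.wf (fun {a b} h => expLt_iff_pilex.mp h) this

theorem ridx_wf : WellFounded (@ridx n) := Finite.wellFounded_of_trans_of_irrefl _

theorem expLt_trichotomy (α β : Fin n × Fin n → ℕ) : expLt α β ∨ α = β ∨ expLt β α := by
  have := @Std.Trichotomous.rel_or_eq_or_rel_swap _ _ (Pi.trichotomous_lex (@ridx n) (fun {_} => ((· < ·) : ℕ → ℕ → Prop)) ridx_wf) α β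
  rcases this with h | h | h
  exacts [Or.inl (expLt_iff_pilex.mpr h), Or.inr (Or.inl h), Or.inr (Or.inr (expLt_iff_pilex.mpr h))]

theorem expLt_trans {α β γ : Fin n × Fin n → ℕ} (h1 : expLt α β) (h2 : expLt β γ) :
    expLt α γ := by
  obtain ⟨p, hp, hpa⟩ := h1
  obtain ⟨p', hp', hpa'⟩ := h2
  rcases idxLt_trichotomy p p' with h | rfl | h
  · exact ⟨p', by rw [hpa p' h]; exact hp', fun r hr => (hpa r (idxLt_trans h hr)).trans (hpa' r hr)⟩
  · exact ⟨p, hp.trans hp', fun r hr => (hpa r hr).trans (hpa' r hr)⟩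
  · exact ⟨p, by rw [← hpa' p h]; exact hp,
      fun r hr => (hpa r hr).trans (hpa' r (idxLt_trans h hr))⟩

theorem expLt_irrefl (α : Fin n × Fin n → ℕ) : ¬ expLt α α := by
  rintro ⟨p, hp, -⟩; exact lt_irrefl _ hp

theorem expLt_asymm {α β : Fin n × Fin n → ℕ} (h : expLt α β) : ¬ expLt β α :=
  fun h' => expLt_irrefl α (expLt_trans h h')

theorem expLt_add_left {α β : Fin n × Fin n → ℕ} (c : Fin n × Fin n → ℕ) (h : expLt α β) :
    expLt (fun p => c p + α p) (fun p => c p + β p) := by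
  obtain ⟨p, hp, hpa⟩ := h
  refine ⟨p, ?_, fun r hr => ?_⟩
  · simpa using Nat.add_lt_add_left hp (c p)
  · simpa using hpa r hr

theorem expLt_of_le_of_ne {α β : Fin n × Fin n → ℕ} (hle : ∀ p, α p ≤ β p) (hne : α ≠ β) :
    expLt α β := by
  rcases expLt_trichotomy α β with h | h | h
  · exact h
  · exact absurd h hne
  · obtain ⟨p, hp, -⟩ := h; exact absurd (hle p) (by omega)


instance (p r : Fin n × Fin n) : Decidable (idxLt p r) := by
  unfold idxLt; exact inferInstance

/-- weak descending order -/
def wge (a b : Fin n × Fin n) : Prop := idxLt b a ∨ a = b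

theorem wge_trans {a b c : Fin n × Fin n} (h1 : wge a b) (h2 : wge b c) : wge a c := by
  rcases h1 with h1 | rfl <;> rcases h2 with h2 | rfl
  · exact Or.inl (idxLt_trans h2 h1)
  · exact Or.inl h1
  · exact Or.inl h2
  · exact Or.inr rfl

theorem wge_of_not_idxLt {a b : Fin n × Fin n} (h : ¬ idxLt a b) : wge a b := by
  rcases idxLt_trichotomy a b with h' | h' | h'
  exacts [absurd h' h, Or.inr h', Or.inl h']

/-- all indices, descending -/
def descIdx (n : ℕ) : List (Fin n × Fin n) :=
  (List.finRange n).reverse.flatMap fun i => (List.finRange n).reverse.map fun j => (i, j)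

theorem descIdx_pairwise : (descIdx n).Pairwise (fun a b => idxLt b a) := by
  rw [descIdx, List.pairwise_flatMap]
  constructor
  · intro i _
    rw [List.pairwise_map]
    refine (List.pairwise_reverse.2 ?_)
    exact (List.pairwise_lt_finRange n).imp fun h => Or.inr ⟨rfl, h⟩
  · have houter : ((List.finRange n).reverse).Pairwise (fun i1 i2 => i2 < i1) :=
      List.pairwise_reverse.2 (List.pairwise_lt_finRange n)
    refine List.Pairwise.imp ?_ houter
    intro i1 i2 h x hx y hy
    simp only [List.mem_map] at hx hy
    obtain ⟨j1, -, rfl⟩ := hx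
    obtain ⟨j2, -, rfl⟩ := hy
    exact Or.inl h

theorem mem_descIdx (p : Fin n × Fin n) : p ∈ descIdx n := by
  rw [descIdx, List.mem_flatMap]
  exact ⟨p.1, by simp, by simp⟩

theorem descIdx_nodup : (descIdx n).Nodup := by
  refine descIdx_pairwise.imp ?_
  intro a b h
  rintro rfl
  exact idxLt_irrefl a h

/-- the canonical (sorted-descending) word with exponent vector `γ` -/
def cword (γ : Fin n × Fin n → ℕ) : List (Fin n × Fin n) :=
  (descIdx n).flatMap fun p => List.replicate (γ p) p

theorem cword_sorted (γ : Fin n × Fin n → ℕ) : (cword γ).Pairwise wge := by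
  rw [cword, List.pairwise_flatMap]
  constructor
  · intro p _
    rw [List.pairwise_replicate]
    exact Or.inr (Or.inr rfl)
  · refine descIdx_pairwise.imp ?_
    intro a b h x hx y hy
    rw [List.eq_of_mem_replicate hx, List.eq_of_mem_replicate hy]
    exact Or.inl h

theorem count_flatMap_replicate (ks : List (Fin n × Fin n)) (hnd : ks.Nodup)
    (γ : Fin n × Fin n → ℕ) (p : Fin n × Fin n) (hp : p ∈ ks) :
    (ks.flatMap fun k => List.replicate (γ k) k).count p = γ p := by
  induction ks with
  | nil => simp at hp
  | cons k ks ih =>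
    rw [List.flatMap_cons, List.count_append]
    rcases List.nodup_cons.1 hnd with ⟨hk, hnd'⟩
    by_cases hpk : p = k
    · subst hpk
      rw [List.count_replicate_self]
      have : (ks.flatMap fun k => List.replicate (γ k) k).count p = 0 := by
        rw [List.count_eq_zero]
        intro hmem
        rw [List.mem_flatMap] at hmem
        obtain ⟨k', hk', hmem'⟩ := hmem
        exact hk ((List.eq_of_mem_replicate hmem') ▸ hk')
      omega
    · rw [List.count_eq_zero.2 (by simp [List.mem_replicate, hpk]), ih hnd' (by
        rcases List.mem_cons.1 hp with h | h
        exacts [absurd h hpk, h])]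
      omega

theorem count_cword (γ : Fin n × Fin n → ℕ) (p : Fin n × Fin n) :
    (cword γ).count p = γ p :=
  count_flatMap_replicate _ descIdx_nodup γ p (mem_descIdx p)

theorem sorted_eq_cword (w : List (Fin n × Fin n)) (hs : w.Pairwise wge) :
    w = cword (fun p => w.count p) := by
  haveI : IsAntisymm (Fin n × Fin n) wge := ⟨by
    rintro a b (h1 | rfl) (h2 | h2)
    · exact absurd (idxLt_trans h1 h2) (idxLt_irrefl b)
    · exact h2.symm
    · rfl
    · rfl⟩
  refine List.Perm.eq_of_pairwise' hs (cword_sorted _) ?_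
  have bridge : ∀ (l : List (Fin n × Fin n)) (p : Fin n × Fin n),
      @List.count _ instBEqOfDecidableEq p l = List.count p l := by
    intro l p
    induction l with
    | nil => rfl
    | cons a l ih =>
      simp only [List.count_cons, ih]
      by_cases h : a = p <;> simp [instBEqOfDecidableEq, h]
  refine (List.perm_iff_count).2 fun p => ?_
  simpa using (count_cword (fun p => List.count p w) p).symm

/-- number of (adjacent-reachable) inversions: pairs where a later letter is strictly bigger -/
def winv : List (Fin n × Fin n) → ℕ
  | [] => 0
  | a :: l => l.countP (fun x => decide (idxLt a x)) + winv l

theorem winv_swap (u v : List (Fin n × Fin n)) {p r : Fin n × Fin n} (h : idxLt p r) :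
    winv (u ++ r :: p :: v) < winv (u ++ p :: r :: v) := by
  induction u with
  | nil =>
    simp only [List.nil_append, winv, List.countP_cons]
    have hpr : decide (idxLt p r) = true := by simpa using h
    have hrp : decide (idxLt r p) = false := by
      simp only [decide_eq_false_iff_not]
      exact fun h' => idxLt_irrefl p (idxLt_trans h h')
    simp [hpr, hrp]
    omega
  | cons c u ih =>
    simp only [List.cons_append, winv, List.append_eq]
    have : (u ++ r :: p :: v).countP (fun x => decide (idxLt c x))
        = (u ++ p :: r :: v).countP (fun x => decide (idxLt c x)) := by
      simp only [List.countP_append, List.countP_cons]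
      omega
    omega

theorem exists_adj (w : List (Fin n × Fin n)) (h : ¬ w.Pairwise wge) :
    ∃ u p r v, w = u ++ p :: r :: v ∧ idxLt p r := by
  induction w with
  | nil => exact absurd List.Pairwise.nil h
  | cons a l ih =>
    match l, ih with
    | [], _ => exact absurd (List.pairwise_singleton _ a) h
    | b :: l', ih =>
      by_cases hab : idxLt a b
      · exact ⟨[], a, b, l', rfl, hab⟩
      · have hwge : wge a b := wge_of_not_idxLt hab
        have hns : ¬ (b :: l').Pairwise wge := by
          intro hs
          refine h ?_
          rw [List.pairwise_cons]
          refine ⟨?_, hs⟩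
          intro x hx
          rcases List.mem_cons.1 hx with rfl | hx'
          · exact hwge
          · exact wge_trans hwge ((List.pairwise_cons.1 hs).1 x hx')
        obtain ⟨u, p, r, v, heq, hlt⟩ := ih hns
        exact ⟨a :: u, p, r, v, by rw [heq]; rfl, hlt⟩


section AlgebraPart

variable (K : Type*) [Field K] (q : K) {n : ℕ}

noncomputable def Zl (p : Fin n × Fin n) : QuantumMatrix K q n :=
  Zgen K q n p.1 p.2

noncomputable def wprod (w : List (Fin n × Fin n)) : QuantumMatrix K q n :=
  (w.map (Zl K q)).prod

def content (w : List (Fin n × Fin n)) : Fin n × Fin n → ℕ :=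
  fun p => w.count p

theorem wprod_append (u v : List (Fin n × Fin n)) :
    wprod K q (u ++ v) = wprod K q u * wprod K q v := by
  simp [wprod, List.map_append, List.prod_append]

theorem wprod_flatMap {α : Type*} (l : List α) (f : α → List (Fin n × Fin n)) :
    wprod K q (l.flatMap f) = (l.map fun a => wprod K q (f a)).prod := by
  induction l with
  | nil => simp [wprod]
  | cons a l ih =>
    rw [List.flatMap_cons, wprod_append, ih, List.map_cons, List.prod_cons]

theorem wprod_replicate (m : ℕ) (p : Fin n × Fin n) :
    wprod K q (List.replicate m p) = Zl K q p ^ m := by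
  simp [wprod, List.map_replicate, List.prod_replicate]

theorem prod_flatMap' {M : Type*} [Monoid M] {α : Type*} (l : List α) (f : α → List M) :
    (l.flatMap f).prod = (l.map fun a => (f a).prod).prod := by
  induction l with
  | nil => simp
  | cons a l ih => rw [List.flatMap_cons, List.prod_append, ih, List.map_cons, List.prod_cons]

theorem zmon_eq (γ : Fin n × Fin n → ℕ) : zmon K q γ = wprod K q (cword γ) := by
  rw [zmon, prod_flatMap', cword, descIdx, List.flatMap_assoc, wprod_flatMap]
  refine congrArg List.prod (List.map_congr_left fun i _ => ?_)
  rw [List.flatMap_map, wprod_flatMap]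
  refine congrArg List.prod (List.map_congr_left fun j _ => ?_)
  rw [wprod_replicate]
  rfl

/-- the commutation rule for a pair of generators in the wrong order -/
theorem Zswap (hq : q ≠ 0) {s t i j : Fin n} (h : idxLt (s, t) (i, j)) :
    ∃ lam : K, lam ≠ 0 ∧ ∃ mu : K, ∃ a c : Fin n × Fin n,
      Zl K q (s, t) * Zl K q (i, j)
        = lam • (Zl K q (i, j) * Zl K q (s, t)) + mu • (Zl K q a * Zl K q c) ∧
      (mu = 0 ∨ expLt (fun x => eps a.1 a.2 x + eps c.1 c.2 x)
        (fun x => eps i j x + eps s t x)) := by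
  have rel : ∀ {x y : FreeAlgebra K (Fin n × Fin n)}, QMRel K q n x y →
      RingQuot.mkAlgHom K (QMRel K q n) x = RingQuot.mkAlgHom K (QMRel K q n) y :=
    fun hxy => RingQuot.mkAlgHom_rel K hxy
  rcases h with hsi | ⟨hsi, htj⟩
  · -- s < i
    rcases lt_trichotomy t j with htj | rfl | hjt
    · -- R4 case
      have e := rel (QMRel.r4 s t i j hsi htj)
      simp only [map_mul, map_add, map_smul] at e
      refine ⟨1, one_ne_zero, q - q⁻¹, (s, j), (i, t), ?_, ?_⟩
      · rw [one_smul]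
        exact e
      · refine Or.inr ⟨(i, j), ?_, ?_⟩
        · have h1 : ((i : Fin n), (j : Fin n)) ≠ (s, j) := by
            intro h'; injection h' with ha hb; exact hsi.ne' ha
          have h2 : ((i : Fin n), (j : Fin n)) ≠ (i, t) := by
            intro h'; injection h' with ha hb; exact htj.ne' hb
          have h4 : ((i : Fin n), (j : Fin n)) ≠ (s, t) := by
            intro h'; injection h' with ha hb; exact hsi.ne' ha
          simp [eps, h1, h2, h4]
        · intro x hx
          have hx1 : x ≠ (i, j) := by
            rintro rfl; exact idxLt_irrefl _ hx
          have hx2 : x ≠ (s, t) := by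
            rintro rfl; exact idxLt_irrefl _ (idxLt_trans hx (Or.inl hsi))
          have hx3 : x ≠ (s, j) := by
            rintro rfl; exact idxLt_irrefl _ (idxLt_trans hx (Or.inl hsi))
          have hx4 : x ≠ (i, t) := by
            rintro rfl; exact idxLt_irrefl _ (idxLt_trans hx (Or.inr ⟨rfl, htj⟩))
          simp [eps, hx1, hx2, hx3, hx4]
    · -- t = j : R2 case
      have e := rel (QMRel.r2 s t i hsi)
      simp only [map_mul, map_smul] at e
      refine ⟨q, hq, 0, (s, t), (s, t), ?_, Or.inl rfl⟩
      rw [zero_smul, add_zero]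
      exact e
    · -- j < t : R3 case
      have e := rel (QMRel.r3 s t i j hsi hjt)
      simp only [map_mul] at e
      refine ⟨1, one_ne_zero, 0, (s, t), (s, t), ?_, Or.inl rfl⟩
      rw [one_smul, zero_smul, add_zero]
      exact e
  · -- s = i, t < j : R1 case
    subst hsi
    have e := rel (QMRel.r1 s t j htj)
    simp only [map_mul, map_smul] at e
    refine ⟨q, hq, 0, (s, t), (s, t), ?_, Or.inl rfl⟩
    rw [zero_smul, add_zero]
    exact e

theorem count_cons_eps (wp x : Fin n × Fin n) :
    (if (wp == x) = true then (1 : ℕ) else 0) = eps wp.1 wp.2 x := by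
  by_cases h : x = wp
  · subst h; simp [eps]
  · simp [eps, beq_iff_eq, Prod.mk.eta, h, Ne.symm h]

theorem content_split (u v : List (Fin n × Fin n)) (y z : Fin n × Fin n) :
    content (u ++ y :: z :: v)
      = fun x => (List.count x u + List.count x v)
          + (eps z.1 z.2 x + eps y.1 y.2 x) := by
  funext x
  simp only [content, List.count_append, List.count_cons, count_cons_eps]
  omega

theorem content_swap (u v : List (Fin n × Fin n)) (y z : Fin n × Fin n) :
    content (u ++ z :: y :: v) = content (u ++ y :: z :: v) := by
  rw [content_split, content_split]
  funext x
  omega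

variable {K q}
variable (b : Module.Basis (Fin n × Fin n → ℕ) K (QuantumMatrix K q n))

/-- Main lemma: the leading exponent of the product along a word is its content. -/
theorem lead_wprod (hq : q ≠ 0) (hb : ∀ α, b α = zmon K q α)
    (w : List (Fin n × Fin n)) :
    IsLeadExpWrt expLt b (wprod K q w) (content w) := by
  have wfR : WellFounded (Prod.Lex (@expLt n) ((· < ·) : ℕ → ℕ → Prop)) :=
    WellFounded.prod_lex expLt_wf (Nat.lt_wfRel.wf)
  have H : ∀ m : ((Fin n × Fin n) → ℕ) × ℕ, ∀ w : List (Fin n × Fin n),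
      (content w, winv w) = m → IsLeadExpWrt expLt b (wprod K q w) (content w) := by
    refine fun m => WellFounded.induction wfR
      (C := fun m => ∀ w : List (Fin n × Fin n), (content w, winv w) = m →
        IsLeadExpWrt expLt b (wprod K q w) (content w)) m ?_
    intro m IH w hm
    subst hm
    by_cases hs : w.Pairwise wge
    · -- sorted: the word is the canonical word of its content
      have hcw : w = cword (content w) := sorted_eq_cword w hs
      have hbw : wprod K q w = b (content w) := by
        conv_lhs => rw [hcw]
        rw [← zmon_eq, ← hb]
      refine ⟨?_, ?_⟩
      · rw [hbw, b.repr_self]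
        simp
      · intro δ hδ
        by_cases hδγ : δ = content w
        · exact Or.inl hδγ
        · rw [hbw, b.repr_self, Finsupp.single_apply, if_neg (Ne.symm hδγ)] at hδ
          exact absurd rfl hδ
    · -- not sorted: swap an adjacent inversion
      obtain ⟨u, p, r, v, rfl, hpr⟩ := exists_adj w hs
      obtain ⟨lam, hlam, mu, a, c, heq, hmu⟩ := Zswap K q hq
        (s := p.1) (t := p.2) (i := r.1) (j := r.2) hpr
      have hsplit : ∀ y z : Fin n × Fin n,
          wprod K q (u ++ y :: z :: v)
            = wprod K q u * ((Zl K q y * Zl K q z) * wprod K q v) := by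
        intro y z
        rw [wprod_append]
        congr 1
        simp [wprod, mul_assoc]
      have hrel1 : Prod.Lex (@expLt n) ((· < ·) : ℕ → ℕ → Prop)
          (content (u ++ r :: p :: v), winv (u ++ r :: p :: v))
          (content (u ++ p :: r :: v), winv (u ++ p :: r :: v)) := by
        rw [content_swap]
        exact Prod.Lex.right _ (winv_swap u v hpr)
      have ih1 := IH _ hrel1 (u ++ r :: p :: v) rfl
      rcases hmu with rfl | hlex'
      · -- no correction term
        have hW : wprod K q (u ++ p :: r :: v) = lam • wprod K q (u ++ r :: p :: v) := by
          rw [hsplit p r, hsplit r p]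
          rw [Prod.mk.eta, Prod.mk.eta] at heq
          rw [heq, zero_smul, add_zero]
          simp only [smul_mul_assoc, mul_smul_comm]
        have hr : ∀ δ, b.repr (wprod K q (u ++ p :: r :: v)) δ
            = lam * b.repr (wprod K q (u ++ r :: p :: v)) δ := by
          intro δ
          rw [hW, map_smul]
          simp
        refine ⟨?_, ?_⟩
        · rw [hr]
          refine mul_ne_zero hlam ?_
          rw [← content_swap u v p r]
          exact ih1.1
        · intro δ hδ
          rw [hr] at hδ
          have hδ1 : b.repr (wprod K q (u ++ r :: p :: v)) δ ≠ 0 := by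
            intro h0; rw [h0, mul_zero] at hδ; exact hδ rfl
          have := ih1.2 δ hδ1
          rwa [content_swap] at this
      · -- with correction term
        have hW : wprod K q (u ++ p :: r :: v)
            = lam • wprod K q (u ++ r :: p :: v) + mu • wprod K q (u ++ a :: c :: v) := by
          rw [hsplit p r, hsplit r p, hsplit a c]
          rw [Prod.mk.eta, Prod.mk.eta] at heq
          rw [heq]
          simp only [add_mul, mul_add, smul_mul_assoc, mul_smul_comm]
        have hlex : expLt (content (u ++ a :: c :: v)) (content (u ++ p :: r :: v)) := by
          rw [content_split u v a c, content_split u v p r]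
          refine expLt_add_left _ ?_
          have hflip : (fun x => eps c.1 c.2 x + eps a.1 a.2 x)
              = (fun x => eps a.1 a.2 x + eps c.1 c.2 x) :=
            funext fun x => add_comm _ _
          rw [hflip]
          exact hlex'
        have ih2 := IH _ (Prod.Lex.left _ _ hlex) (u ++ a :: c :: v) rfl
        have hr : ∀ δ, b.repr (wprod K q (u ++ p :: r :: v)) δ
            = lam * b.repr (wprod K q (u ++ r :: p :: v)) δ
              + mu * b.repr (wprod K q (u ++ a :: c :: v)) δ := by
          intro δ
          rw [hW, map_add, map_smul, map_smul]
          simp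
        have h20 : b.repr (wprod K q (u ++ a :: c :: v)) (content (u ++ p :: r :: v)) = 0 := by
          by_contra hne
          rcases ih2.2 _ hne with hEq | hlt
          · rw [hEq] at hlex
            exact expLt_irrefl _ hlex
          · exact expLt_irrefl _ (expLt_trans hlt hlex)
        refine ⟨?_, ?_⟩
        · rw [hr, h20, mul_zero, add_zero]
          refine mul_ne_zero hlam ?_
          rw [← content_swap u v p r]
          exact ih1.1
        · intro δ hδ
          rw [hr] at hδ
          by_cases h1 : b.repr (wprod K q (u ++ r :: p :: v)) δ = 0
          · have h2 : b.repr (wprod K q (u ++ a :: c :: v)) δ ≠ 0 := by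
              intro h0; rw [h0, h1, mul_zero, mul_zero, add_zero] at hδ; exact hδ rfl
            rcases ih2.2 δ h2 with hEq | hlt
            · exact Or.inr (hEq ▸ hlex)
            · exact Or.inr (expLt_trans hlt hlex)
          · have := ih1.2 δ h1
            rwa [content_swap] at this
  exact H (content w, winv w) w rfl

end AlgebraPart

end QMX

/-- Theorem 2.3: `M_q(n)` is a solvable polynomial algebra:
there is a total well-order `≺` on `ℕ^{I(n)}` (namely the lexicographic
order) which is a monomial ordering on the PBW basis (conditions (2) and
(3)), and with respect to which the products of generators taken in the
wrong order rewrite as `z_{st} z_{ij} = λ z_{ij} z_{st} + f` with `λ ≠ 0`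
and `LE(f) ≺ ε_{ij} + ε_{st}` (or `f = 0`). -/
theorem quantumMatrix_solvable (K : Type*) [Field K] [CharZero K]
    (q : K) (hq : q ≠ 0) (n : ℕ) (hn : 2 ≤ n)
    (b : Module.Basis (Fin n × Fin n → ℕ) K (QuantumMatrix K q n))
    (hb : ∀ α, b α = zmon K q α) :
    ∃ lt : (Fin n × Fin n → ℕ) → (Fin n × Fin n → ℕ) → Prop,
      IsWellOrder (Fin n × Fin n → ℕ) lt ∧
      (∀ α β η γ : Fin n × Fin n → ℕ, γ ≠ 0 → β ≠ γ →
        IsLeadExpWrt lt b (zmon K q α * zmon K q β * zmon K q η) γ → lt β γ) ∧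
      (∀ α β γ η γ₁ γ₂ : Fin n × Fin n → ℕ, lt α β →
        IsLeadExpWrt lt b (zmon K q γ * zmon K q α * zmon K q η) γ₁ →
        IsLeadExpWrt lt b (zmon K q γ * zmon K q β * zmon K q η) γ₂ →
        lt γ₁ γ₂) ∧
      (∀ s t i j : Fin n, idxLt (s, t) (i, j) →
        ∃ (lam : K) (f : QuantumMatrix K q n), lam ≠ 0 ∧
          Zgen K q n s t * Zgen K q n i j
            = lam • (Zgen K q n i j * Zgen K q n s t) + f ∧
          (f = 0 ∨ ∀ γ, b.repr f γ ≠ 0 → lt γ (eps i j + eps s t))) := by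
  classical
  have lead3 : ∀ α β η : Fin n × Fin n → ℕ,
      IsLeadExpWrt expLt b (zmon K q α * zmon K q β * zmon K q η)
        (fun p => α p + β p + η p) := by
    intro α β η
    have h := QMX.lead_wprod b hq hb ((QMX.cword α ++ QMX.cword β) ++ QMX.cword η)
    have hc : QMX.content ((QMX.cword α ++ QMX.cword β) ++ QMX.cword η)
        = fun p => α p + β p + η p := by
      funext p
      simp only [QMX.content, List.count_append, QMX.count_cword]
      try omega
    rw [hc, QMX.wprod_append, QMX.wprod_append, ← QMX.zmon_eq, ← QMX.zmon_eq,
      ← QMX.zmon_eq] at h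
    exact h
  have uniq : ∀ (f : QuantumMatrix K q n) γ γ', IsLeadExpWrt expLt b f γ →
      IsLeadExpWrt expLt b f γ' → γ = γ' := by
    intro f γ γ' h h'
    rcases h'.2 γ h.1 with he | hl
    · exact he
    · rcases h.2 γ' h'.1 with he | hl'
      · exact he.symm
      · exact absurd hl' (QMX.expLt_asymm hl)
  refine ⟨expLt, ?_, ?_, ?_, ?_⟩
  · haveI h1 : IsTrichotomous (Fin n × Fin n → ℕ) expLt :=
        Std.trichotomous_of_rel_or_eq_or_rel_swap (fun {a b} => QMX.expLt_trichotomy a b)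
    haveI h2 : IsTrans (Fin n × Fin n → ℕ) expLt := ⟨fun _ _ _ => QMX.expLt_trans⟩
    haveI h3 : IsWellFounded (Fin n × Fin n → ℕ) expLt := ⟨QMX.expLt_wf⟩
    exact {}
  · -- condition (2)
    intro α β η γ _ hβγ h
    have hγ := uniq _ _ _ h (lead3 α β η)
    subst hγ
    refine QMX.expLt_of_le_of_ne (fun p => ?_) hβγ
    omega
  · -- condition (3)
    intro α β γ η γ₁ γ₂ hab h1 h2
    have e1 := uniq _ _ _ h1 (lead3 γ α η)
    have e2 := uniq _ _ _ h2 (lead3 γ β η)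
    rw [e1, e2]
    have hkey := QMX.expLt_add_left (fun p => γ p + η p) hab
    have eA : (fun p => (γ p + η p) + α p) = (fun p => γ p + α p + η p) :=
      funext fun p => by omega
    have eB : (fun p => (γ p + η p) + β p) = (fun p => γ p + β p + η p) :=
      funext fun p => by omega
    rw [eA, eB] at hkey
    exact hkey
  · -- condition (4)
    intro s t i j h
    obtain ⟨lam, hlam, mu, a, c, heq, hmu⟩ := QMX.Zswap K q hq h
    refine ⟨lam, mu • (QMX.Zl K q a * QMX.Zl K q c), hlam, heq, ?_⟩
    rcases hmu with rfl | hlex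
    · exact Or.inl (zero_smul _ _)
    · refine Or.inr fun γ hγ => ?_
      have hγ' : b.repr (QMX.Zl K q a * QMX.Zl K q c) γ ≠ 0 := by
        intro h0
        apply hγ
        rw [map_smul]
        simp [h0]
      have hpair : QMX.Zl K q a * QMX.Zl K q c = QMX.wprod K q [a, c] := by
        simp [QMX.wprod]
      have hl := QMX.lead_wprod b hq hb [a, c]
      have hcac : QMX.content [a, c] = fun x => eps a.1 a.2 x + eps c.1 c.2 x := by
        rw [show ([a, c] : List (Fin n × Fin n)) = [] ++ a :: c :: [] from rfl,
          QMX.content_split]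
        funext x
        simp only [List.count_nil]
        omega
      rw [hpair] at hγ'
      rcases hl.2 γ hγ' with he | hlt
      · rw [he, hcac]
        exact hlex
      · rw [hcac] at hlt
        exact QMX.expLt_trans hlt hlex
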